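/- arXiv:1310.3569 — 2 statements merged into one kernel-verified Lean document; each statement's English description precedes it below -/
import Mathlib

section
/- Let k be a field of characteristic ≠ 2. Let R = k[x₁,y₁,x₂,y₂,x₃,y₃]/(yᵢ² − xᵢ(xᵢ²−1), i = 1,2,3), an integral domain, let K = Frac(R), and assume the images of all xᵢ, yᵢ are nonzero in K. Set bⱼ = xⱼ/x₁, aⱼ = yⱼ/y₁ for j = 2,3, and u₁ = x₁². Then for each j ∈ {2,3}: (i) u₁·(aⱼ² − bⱼ³) = aⱼ² − bⱼ in K; (ii) aⱼ² − bⱼ³ ≠ 0 in K; and consequently (iii) u₁ = (aⱼ² − bⱼ)/(aⱼ² − bⱼ³) in K. -/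
open MvPolynomial

noncomputable section

set_option synthInstance.maxHeartbeats 1000000
set_option maxHeartbeats 1000000

/-- The ideal of `k[x₁,y₁,x₂,y₂,x₃,y₃]` generated by the three relations
`yᵢ² - xᵢ(xᵢ² - 1)`, `i = 1,2,3`.  Variables are indexed so that
`x₁ = X 0`, `y₁ = X 1`, `x₂ = X 2`, `y₂ = X 3`, `x₃ = X 4`, `y₃ = X 5`. -/
def uenoIdeal (k : Type*) [Field k] : Ideal (MvPolynomial (Fin 6) k) :=
  Ideal.span { X 1 ^ 2 - X 0 * (X 0 ^ 2 - 1),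
               X 3 ^ 2 - X 2 * (X 2 ^ 2 - 1),
               X 5 ^ 2 - X 4 * (X 4 ^ 2 - 1) }

variable (k : Type*) [Field k] [(uenoIdeal k).IsPrime]

/-- `R = k[x₁,y₁,x₂,y₂,x₃,y₃]/(yᵢ² - xᵢ(xᵢ² - 1), i = 1,2,3)`, the affine coordinate ring of
`Z = C₁ × C₂ × C₃`; it is an integral domain (the defining ideal being prime). -/
abbrev UenoRing : Type _ := MvPolynomial (Fin 6) k ⧸ uenoIdeal k

/-- `K = Frac(R) = k(Z)`, the function field of `Z = C₁ × C₂ × C₃`. -/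
abbrev UenoField : Type _ := FractionRing (UenoRing k)

/-- The image in `K = Frac(R)` of the `i`-th variable. -/
def xv (i : Fin 6) : UenoField k :=
  algebraMap (UenoRing k) (UenoField k) (Ideal.Quotient.mk (uenoIdeal k) (X i))

/-- `x₁` as an element of `K`. -/ def x1 : UenoField k := xv k 0
/-- `y₁` as an element of `K`. -/ def y1 : UenoField k := xv k 1
/-- `x₂` as an element of `K`. -/ def x2 : UenoField k := xv k 2
/-- `y₂` as an element of `K`. -/ def y2 : UenoField k := xv k 3
/-- `x₃` as an element of `K`. -/ def x3 : UenoField k := xv k 4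
/-- `y₃` as an element of `K`. -/ def y3 : UenoField k := xv k 5

/-- `b₂ = x₂/x₁`. -/ def b2 : UenoField k := x2 k / x1 k
/-- `b₃ = x₃/x₁`. -/ def b3 : UenoField k := x3 k / x1 k
/-- `a₂ = y₂/y₁`. -/ def a2 : UenoField k := y2 k / y1 k
/-- `a₃ = y₃/y₁`. -/ def a3 : UenoField k := y3 k / y1 k

/-! ### Auxiliary lemmas -/

/-- Generic field computation underlying equation (XI). -/
lemma ueno_keyA {F : Type*} [Field F] (u v x y : F) (h1 : v^2 = u*(u^2-1))
    (h2 : y^2 = x*(x^2-1)) (hu : u ≠ 0) (hv : v ≠ 0) :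
    u^2 * ((y/v)^2 - (x/u)^3) = (y/v)^2 - x/u := by
  have hu2 : u^2 - 1 ≠ 0 := by
    intro h
    exact hv (by rw [← sq_eq_zero_iff (a := v)] at *; rw [h1, h, mul_zero])
  rw [div_pow, div_pow, h1, h2]
  field_simp
  ring

/-- Generic field computation: factorization of `a² - b`. -/
lemma ueno_keyB {F : Type*} [Field F] (u v x y : F) (h1 : v^2 = u*(u^2-1))
    (h2 : y^2 = x*(x^2-1)) (hu : u ≠ 0) (hv : v ≠ 0) :
    (y/v)^2 - x/u = x*(x-u)*(x+u)/v^2 := by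
  have hu2 : u^2 - 1 ≠ 0 := by
    intro h
    exact hv (by rw [← sq_eq_zero_iff (a := v)] at *; rw [h1, h, mul_zero])
  rw [div_pow, h1, h2]
  field_simp
  ring

/-- The defining relations of `R` hold in `K`. -/
lemma ueno_rel (i j : Fin 6)
    (hmem : X j ^ 2 - X i * (X i ^ 2 - 1) ∈ uenoIdeal k) :
    xv k j ^ 2 = xv k i * (xv k i ^ 2 - 1) := by
  have h0 : Ideal.Quotient.mk (uenoIdeal k) (X j ^ 2 - X i * (X i ^ 2 - 1)) = 0 :=
    Ideal.Quotient.eq_zero_iff_mem.mpr hmem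
  have := congrArg (algebraMap (UenoRing k) (UenoField k)) h0
  simp only [map_sub, map_mul, map_pow, map_one, map_zero] at this
  rw [sub_eq_zero] at this
  simpa [xv] using this

/-- A polynomial whose evaluation at a point of `Z` is nonzero has nonzero image in `K`. -/
lemma ueno_nonzero_of_eval (v : Fin 6 → k)
    (h1 : v 1 ^ 2 = v 0 * (v 0 ^ 2 - 1))
    (h2 : v 3 ^ 2 = v 2 * (v 2 ^ 2 - 1))
    (h3 : v 5 ^ 2 = v 4 * (v 4 ^ 2 - 1))
    (p : MvPolynomial (Fin 6) k) (hp : eval v p ≠ 0) :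
    algebraMap (UenoRing k) (UenoField k) (Ideal.Quotient.mk (uenoIdeal k) p) ≠ 0 := by
  intro h
  have hmk : Ideal.Quotient.mk (uenoIdeal k) p = 0 :=
    IsFractionRing.injective (UenoRing k) (UenoField k) (by simpa using h)
  have hpmem : p ∈ uenoIdeal k := Ideal.Quotient.eq_zero_iff_mem.mp hmk
  have hle : uenoIdeal k ≤ RingHom.ker (eval v) := by
    rw [uenoIdeal, Ideal.span_le]
    intro q hq
    simp only [Set.mem_insert_iff, Set.mem_singleton_iff] at hq
    rcases hq with rfl | rfl | rfl <;>
      simp [RingHom.mem_ker, sub_eq_zero, h1, h2, h3]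
  exact hp (hle hpmem)

lemma ueno_sub_ne (i j : Fin 6) (v : Fin 6 → k)
    (h1 : v 1 ^ 2 = v 0 * (v 0 ^ 2 - 1))
    (h2 : v 3 ^ 2 = v 2 * (v 2 ^ 2 - 1))
    (h3 : v 5 ^ 2 = v 4 * (v 4 ^ 2 - 1))
    (hv : v i - v j ≠ 0) : xv k i - xv k j ≠ 0 := by
  have := ueno_nonzero_of_eval k v h1 h2 h3 (X i - X j) (by simpa using hv)
  simpa [xv, map_sub] using this

lemma ueno_add_ne (i j : Fin 6) (v : Fin 6 → k)
    (h1 : v 1 ^ 2 = v 0 * (v 0 ^ 2 - 1))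
    (h2 : v 3 ^ 2 = v 2 * (v 2 ^ 2 - 1))
    (h3 : v 5 ^ 2 = v 4 * (v 4 ^ 2 - 1))
    (hv : v i + v j ≠ 0) : xv k i + xv k j ≠ 0 := by
  have := ueno_nonzero_of_eval k v h1 h2 h3 (X i + X j) (by simpa using hv)
  simpa [xv, map_add] using this

/-- **Equation (XI)** and its derivation `(**)` in Proposition 2.4: with `u₁ = x₁²`,
for `j = 2,3` one has (i) `u₁(aⱼ² - bⱼ³) = aⱼ² - bⱼ`, (ii) `aⱼ² - bⱼ³ ≠ 0`, and hence
(iii) `u₁ = (aⱼ² - bⱼ)/(aⱼ² - bⱼ³)` in `K = k(Z)`. -/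
theorem u1_eq (h2 : (2 : k) ≠ 0) (hne : ∀ i : Fin 6, xv k i ≠ 0) :
    (x1 k ^ 2 * (a2 k ^ 2 - b2 k ^ 3) = a2 k ^ 2 - b2 k ∧
      a2 k ^ 2 - b2 k ^ 3 ≠ 0 ∧
      x1 k ^ 2 = (a2 k ^ 2 - b2 k) / (a2 k ^ 2 - b2 k ^ 3)) ∧
    (x1 k ^ 2 * (a3 k ^ 2 - b3 k ^ 3) = a3 k ^ 2 - b3 k ∧
      a3 k ^ 2 - b3 k ^ 3 ≠ 0 ∧
      x1 k ^ 2 = (a3 k ^ 2 - b3 k) / (a3 k ^ 2 - b3 k ^ 3)) := by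
  -- the curve relations in `K`
  have r1 : y1 k ^ 2 = x1 k * (x1 k ^ 2 - 1) :=
    ueno_rel k 0 1 (Ideal.subset_span (by simp))
  have r2 : y2 k ^ 2 = x2 k * (x2 k ^ 2 - 1) :=
    ueno_rel k 2 3 (Ideal.subset_span (by simp))
  have r3 : y3 k ^ 2 = x3 k * (x3 k ^ 2 - 1) :=
    ueno_rel k 4 5 (Ideal.subset_span (by simp))
  -- the differences and sums x_j ∓ x₁ are nonzero in K (char k ≠ 2)
  have hs2 : x2 k - x1 k ≠ 0 := by
    refine ueno_sub_ne k 2 0 ![-1, 0, 1, 0, 0, 0]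
      (by norm_num) (by norm_num [show (![(-1:k),0,1,0,0,0]) 3 = 0 from rfl,
                    show (![(-1:k),0,1,0,0,0]) 2 = 1 from rfl])
      (by norm_num [show (![(-1:k),0,1,0,0,0]) 5 = 0 from rfl,
                    show (![(-1:k),0,1,0,0,0]) 4 = 0 from rfl]) ?_
    show (1 : k) - (-1) ≠ 0
    intro h; exact h2 (by linear_combination h)
  have ha2 : x2 k + x1 k ≠ 0 := by
    refine ueno_add_ne k 2 0 ![1, 0, 1, 0, 0, 0]
      (by norm_num) (by norm_num [show (![(1:k),0,1,0,0,0]) 3 = 0 from rfl,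
                    show (![(1:k),0,1,0,0,0]) 2 = 1 from rfl])
      (by norm_num [show (![(1:k),0,1,0,0,0]) 5 = 0 from rfl,
                    show (![(1:k),0,1,0,0,0]) 4 = 0 from rfl]) ?_
    show (1 : k) + 1 ≠ 0
    intro h; exact h2 (by linear_combination h)
  have hs3 : x3 k - x1 k ≠ 0 := by
    refine ueno_sub_ne k 4 0 ![-1, 0, 0, 0, 1, 0]
      (by norm_num) (by norm_num [show (![(-1:k),0,0,0,1,0]) 3 = 0 from rfl,
                    show (![(-1:k),0,0,0,1,0]) 2 = 0 from rfl])
      (by norm_num [show (![(-1:k),0,0,0,1,0]) 5 = 0 from rfl,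
                    show (![(-1:k),0,0,0,1,0]) 4 = 1 from rfl]) ?_
    show (1 : k) - (-1) ≠ 0
    intro h; exact h2 (by linear_combination h)
  have ha3 : x3 k + x1 k ≠ 0 := by
    refine ueno_add_ne k 4 0 ![1, 0, 0, 0, 1, 0]
      (by norm_num) (by norm_num [show (![(1:k),0,0,0,1,0]) 3 = 0 from rfl,
                    show (![(1:k),0,0,0,1,0]) 2 = 0 from rfl])
      (by norm_num [show (![(1:k),0,0,0,1,0]) 5 = 0 from rfl,
                    show (![(1:k),0,0,0,1,0]) 4 = 1 from rfl]) ?_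
    show (1 : k) + 1 ≠ 0
    intro h; exact h2 (by linear_combination h)
  -- part (i) for j = 2, 3
  have hi2 : x1 k ^ 2 * (a2 k ^ 2 - b2 k ^ 3) = a2 k ^ 2 - b2 k := by
    simpa [a2, b2] using
      ueno_keyA (x1 k) (y1 k) (x2 k) (y2 k) r1 r2 (hne 0) (hne 1)
  have hi3 : x1 k ^ 2 * (a3 k ^ 2 - b3 k ^ 3) = a3 k ^ 2 - b3 k := by
    simpa [a3, b3] using
      ueno_keyA (x1 k) (y1 k) (x3 k) (y3 k) r1 r3 (hne 0) (hne 1)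
  -- part (ii)
  have hb2 : a2 k ^ 2 - b2 k ≠ 0 := by
    have := ueno_keyB (x1 k) (y1 k) (x2 k) (y2 k) r1 r2 (hne 0) (hne 1)
    rw [show y2 k / y1 k = a2 k from rfl, show x2 k / x1 k = b2 k from rfl] at this
    rw [this]
    exact div_ne_zero (mul_ne_zero (mul_ne_zero (hne 2) hs2) ha2)
      (pow_ne_zero 2 (hne 1))
  have hb3 : a3 k ^ 2 - b3 k ≠ 0 := by
    have := ueno_keyB (x1 k) (y1 k) (x3 k) (y3 k) r1 r3 (hne 0) (hne 1)
    rw [show y3 k / y1 k = a3 k from rfl, show x3 k / x1 k = b3 k from rfl] at this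
    rw [this]
    exact div_ne_zero (mul_ne_zero (mul_ne_zero (hne 4) hs3) ha3)
      (pow_ne_zero 2 (hne 1))
  have hii2 : a2 k ^ 2 - b2 k ^ 3 ≠ 0 := by
    intro h
    rw [h, mul_zero] at hi2
    exact hb2 hi2.symm
  have hii3 : a3 k ^ 2 - b3 k ^ 3 ≠ 0 := by
    intro h
    rw [h, mul_zero] at hi3
    exact hb3 hi3.symm
  exact ⟨⟨hi2, hii2, (eq_div_iff hii2).mpr hi2⟩,
         ⟨hi3, hii3, (eq_div_iff hii3).mpr hi3⟩⟩
end
end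

section
/- Let k be a field of characteristic ≠ 2 containing an element ζ with ζ² = −1. Let R = k[x₁,y₁,x₂,y₂,x₃,y₃]/(yᵢ² − xᵢ(xᵢ²−1), i = 1,2,3), an integral domain, let K = Frac(R), and assume the images of all xᵢ, yᵢ are nonzero in K. Let g be the k-automorphism of K determined by g(xᵢ) = −xᵢ and g(yᵢ) = ζ·yᵢ for i = 1,2,3. Set b₂ = x₂/x₁, b₃ = x₃/x₁, a₂ = y₂/y₁, a₃ = y₃/y₁. Then the fixed field K^g = { f ∈ K : g(f) = f } equals the subfield k(b₂, b₃, a₂, a₃) of K generated over k by b₂, b₃, a₂, a₃. -/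
open MvPolynomial

set_option synthInstance.maxHeartbeats 1000000
set_option maxHeartbeats 4000000
set_option linter.unusedSectionVars false

noncomputable section

variable (k : Type*) [Field k] [(uenoIdeal k).IsPrime]

/-! ### Auxiliary lemmas -/

lemma ueno_exp (p : MvPolynomial (Fin 6) k) (hp : p ∈ uenoIdeal k) :
    algebraMap (UenoRing k) (UenoField k) (Ideal.Quotient.mk (uenoIdeal k) p) = 0 := by
  rw [Ideal.Quotient.eq_zero_iff_mem.mpr hp, map_zero]

lemma ueno_rel1 : y1 k ^ 2 = x1 k * (x1 k ^ 2 - 1) := by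
  have := ueno_exp k _ (Ideal.subset_span (Set.mem_insert _ _))
  simp only [map_sub, map_mul, map_pow, map_one] at this
  rw [y1, x1, xv, xv]
  linear_combination this

lemma ueno_rel2 : y2 k ^ 2 = x2 k * (x2 k ^ 2 - 1) := by
  have := ueno_exp k _ (Ideal.subset_span (Set.mem_insert_of_mem _ (Set.mem_insert _ _)))
  simp only [map_sub, map_mul, map_pow, map_one] at this
  rw [y2, x2, xv, xv]
  linear_combination this

lemma ueno_rel3 : y3 k ^ 2 = x3 k * (x3 k ^ 2 - 1) := by
  have := ueno_exp k _ (Ideal.subset_span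
    (Set.mem_insert_of_mem _ (Set.mem_insert_of_mem _ rfl)))
  simp only [map_sub, map_mul, map_pow, map_one] at this
  rw [y3, x3, xv, xv]
  linear_combination this

/-- Evaluation at the point `(0,0,1,0,1,0)` of `Z`. -/
def uenoPt : Fin 6 → k := fun i => if i = 2 ∨ i = 4 then 1 else 0

lemma uenoPt_ker : ∀ p ∈ uenoIdeal k, (aeval (uenoPt k) : MvPolynomial (Fin 6) k →ₐ[k] k) p = 0 := by
  intro p hp
  have : uenoIdeal k ≤ RingHom.ker (aeval (uenoPt k) : MvPolynomial (Fin 6) k →ₐ[k] k) := by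
    rw [uenoIdeal, Ideal.span_le]
    rintro q (rfl | rfl | rfl) <;> simp [uenoPt, RingHom.mem_ker]
  exact this hp

/-- Evaluation at the point `(0,0,1,0,1,0)`, as a map on the coordinate ring. -/
def uenoEv : UenoRing k →ₐ[k] k :=
  Ideal.Quotient.liftₐ (uenoIdeal k) (aeval (uenoPt k)) (uenoPt_ker k)

lemma uenoEv_X (i : Fin 6) :
    uenoEv k (Ideal.Quotient.mk (uenoIdeal k) (X i)) = uenoPt k i := by
  simp [uenoEv]

/-- `x₂ ≠ ± x₁` in `K`. -/
lemma ueno_sub_ne_s7 : xv k 2 - xv k 0 ≠ 0 ∧ xv k 2 + xv k 0 ≠ 0 := by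
  have hinj : Function.Injective (algebraMap (UenoRing k) (UenoField k)) :=
    IsFractionRing.injective _ _
  constructor <;> intro h
  · rw [xv, xv, ← map_sub, ← map_zero (algebraMap (UenoRing k) (UenoField k))] at h
    have := congrArg (uenoEv k) (hinj h)
    simp [uenoEv, uenoPt] at this
  · rw [xv, xv, ← map_add, ← map_zero (algebraMap (UenoRing k) (UenoField k))] at h
    have := congrArg (uenoEv k) (hinj h)
    simp [uenoEv, uenoPt] at this

/-- The key identity `x₁²(a₂² - b₂³) = a₂² - b₂`. -/
lemma ueno_key (hx1 : x1 k ≠ 0) (hy1 : y1 k ≠ 0) :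
    x1 k ^ 2 * (a2 k ^ 2 - b2 k ^ 3) = a2 k ^ 2 - b2 k := by
  have hd : x1 k ^ 3 - x1 k ≠ 0 := by
    have : x1 k ^ 3 - x1 k = y1 k ^ 2 := by rw [ueno_rel1]; ring
    rw [this]; exact pow_ne_zero _ hy1
  have h1 : a2 k ^ 2 = (x2 k ^ 3 - x2 k) / (x1 k ^ 3 - x1 k) := by
    rw [a2, div_pow, ueno_rel1, ueno_rel2]; ring_nf
  rw [b2, h1]
  have hd2 : x1 k ^ 2 - 1 ≠ 0 := fun h => hd (by linear_combination x1 k * h)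
  field_simp
  ring

/-- `K` is generated over `k` by the images of the variables. -/
lemma ueno_gen_top : IntermediateField.adjoin k (Set.range (xv k)) = ⊤ := by
  rw [eq_top_iff]
  intro z _
  have key : ∀ r : UenoRing k,
      algebraMap (UenoRing k) (UenoField k) r ∈ IntermediateField.adjoin k (Set.range (xv k)) := by
    intro r
    obtain ⟨p, rfl⟩ := Ideal.Quotient.mk_surjective r
    induction p using MvPolynomial.induction_on with
    | C a =>
        have : Ideal.Quotient.mk (uenoIdeal k) (C a) = algebraMap k (UenoRing k) a := rfl
        rw [this, ← IsScalarTower.algebraMap_apply]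
        exact IntermediateField.algebraMap_mem _ a
    | add p q hp hq => rw [map_add, map_add]; exact add_mem hp hq
    | mul_X p i hp =>
        rw [map_mul, map_mul]
        exact mul_mem hp (IntermediateField.subset_adjoin _ _ ⟨i, rfl⟩)
  obtain ⟨a, b, hb, rfl⟩ := IsFractionRing.div_surjective (A := UenoRing k) z
  exact div_mem (key a) (key b)

/-- A `k`-automorphism of `K` fixing the variables is the identity. -/
lemma ueno_fix_of_fix_gens (σ : UenoField k ≃ₐ[k] UenoField k)
    (hσ : ∀ i, σ (xv k i) = xv k i) (x : UenoField k) : σ x = x := by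
  have hR : ∀ r : UenoRing k,
      σ (algebraMap (UenoRing k) (UenoField k) r) = algebraMap (UenoRing k) (UenoField k) r := by
    have hcomp : ((σ : UenoField k →ₐ[k] UenoField k).comp
          (IsScalarTower.toAlgHom k (UenoRing k) (UenoField k))).comp
          (Ideal.Quotient.mkₐ k (uenoIdeal k)) =
        (IsScalarTower.toAlgHom k (UenoRing k) (UenoField k)).comp
          (Ideal.Quotient.mkₐ k (uenoIdeal k)) :=
      MvPolynomial.algHom_ext fun i => hσ i
    intro r
    obtain ⟨p, rfl⟩ := Ideal.Quotient.mk_surjective r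
    exact AlgHom.congr_fun hcomp p
  obtain ⟨a, b, hb, rfl⟩ := IsFractionRing.div_surjective (A := UenoRing k) x
  rw [map_div₀, hR, hR]

/-- Fixed points of an automorphism are fixed by all its integer powers. -/
lemma fix_zpow {L E : Type*} [Field L] [Field E] [Algebra L E] (σ : E ≃ₐ[L] E) {x : E}
    (hx : σ x = x) : ∀ n : ℤ, (σ ^ n) x = x := by
  have hn : ∀ n : ℕ, (σ ^ n) x = x := by
    intro n
    induction n with
    | zero => rw [pow_zero]; rfl
    | succ m ih => rw [pow_succ, AlgEquiv.mul_apply, hx, ih]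
  intro n
  cases n with
  | ofNat m => simpa using hn m
  | negSucc m =>
      rw [zpow_negSucc]
      apply (σ ^ (m + 1)).injective
      rw [← AlgEquiv.mul_apply, mul_inv_cancel, hn (m + 1)]
      rfl

lemma ueno_final (F : IntermediateField k (UenoField k))
    (hb2F : b2 k ∈ F) (hb3F : b3 k ∈ F) (ha2F : a2 k ∈ F) (ha3F : a3 k ∈ F)
    (hx1 : x1 k ≠ 0) (hy1 : y1 k ≠ 0)
    (hx1sqF : x1 k ^ 2 ∈ F) (hy14F : y1 k ^ 4 ∈ F) (hx1sub : x1 k ^ 2 - 1 ≠ 0)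
    (g' : UenoField k ≃ₐ[↥F] UenoField k) (horder : orderOf g' = 4)
    (f : UenoField k) (hf : g' f = f) : f ∈ F := by
  classical
  -- K = F(y₁)
  set S : IntermediateField ↥F (UenoField k) := IntermediateField.adjoin ↥F ({y1 k} : Set (UenoField k)) with hSdef
  have hy1S : y1 k ∈ S := IntermediateField.subset_adjoin _ _ rfl
  have hFS : ∀ z ∈ F, z ∈ S := by
    intro z hz
    have := S.algebraMap_mem ⟨z, hz⟩
    rwa [IntermediateField.algebraMap_apply] at this
  have hx1S : x1 k ∈ S := by
    have hx1e : x1 k = y1 k ^ 2 / (x1 k ^ 2 - 1) := by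
      rw [eq_div_iff hx1sub, ueno_rel1]
    rw [hx1e]
    exact div_mem (pow_mem hy1S 2) (sub_mem (hFS _ hx1sqF) (one_mem S))
  have hxvS : ∀ i : Fin 6, xv k i ∈ S := by
    have hx2S : x2 k ∈ S := by
      have : x2 k = b2 k * x1 k := by rw [b2]; field_simp
      rw [this]; exact mul_mem (hFS _ hb2F) hx1S
    have hx3S : x3 k ∈ S := by
      have : x3 k = b3 k * x1 k := by rw [b3]; field_simp
      rw [this]; exact mul_mem (hFS _ hb3F) hx1S
    have hy2S : y2 k ∈ S := by
      have : y2 k = a2 k * y1 k := by rw [a2]; field_simp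
      rw [this]; exact mul_mem (hFS _ ha2F) hy1S
    have hy3S : y3 k ∈ S := by
      have : y3 k = a3 k * y1 k := by rw [a3]; field_simp
      rw [this]; exact mul_mem (hFS _ ha3F) hy1S
    intro i
    fin_cases i
    · exact hx1S
    · exact hy1S
    · exact hx2S
    · exact hy2S
    · exact hx3S
    · exact hy3S
  have hStop : S = ⊤ := by
    apply IntermediateField.restrictScalars_injective k
    rw [IntermediateField.restrictScalars_top, eq_top_iff, ← ueno_gen_top k,
      IntermediateField.adjoin_le_iff]
    rintro _ ⟨i, rfl⟩
    exact hxvS i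
  -- y₁ is integral of degree ≤ 4 over F
  have hint : IsIntegral ↥F (y1 k) := by
    refine ⟨Polynomial.X ^ 4 - Polynomial.C (⟨y1 k ^ 4, hy14F⟩ : ↥F),
      Polynomial.monic_X_pow_sub_C _ (by norm_num), ?_⟩
    simp only [Polynomial.eval₂_sub, Polynomial.eval₂_X_pow, Polynomial.eval₂_C]
    exact sub_eq_zero_of_eq rfl
  have hfd : FiniteDimensional ↥F (UenoField k) := by
    have h1 := IntermediateField.adjoin.finiteDimensional hint
    have h2 : FiniteDimensional ↥F ↥S := h1
    rw [hStop] at h2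
    exact Module.Finite.equiv IntermediateField.topEquiv.toLinearEquiv
  have hle : Module.finrank ↥F (UenoField k) ≤ 4 := by
    have e1 : Module.finrank ↥F (UenoField k) = (minpoly ↥F (y1 k)).natDegree := by
      rw [← IntermediateField.adjoin.finrank hint, ← hSdef, hStop,
        IntermediateField.finrank_top']
    rw [e1]
    have hdvd : minpoly ↥F (y1 k) ∣ Polynomial.X ^ 4 - Polynomial.C (⟨y1 k ^ 4, hy14F⟩ : ↥F) := by
      apply minpoly.dvd
      simp only [map_sub, map_pow, Polynomial.aeval_X, Polynomial.aeval_C]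
      exact sub_eq_zero_of_eq rfl
    calc (minpoly ↥F (y1 k)).natDegree
        ≤ (Polynomial.X ^ 4 - Polynomial.C (⟨y1 k ^ 4, hy14F⟩ : ↥F)).natDegree :=
          Polynomial.natDegree_le_of_dvd hdvd
            (Polynomial.monic_X_pow_sub_C _ (by norm_num)).ne_zero
      _ = 4 := by
          rw [Polynomial.natDegree_X_pow_sub_C]
  -- Artin : the fixed field of ⟨g'⟩ has index 4
  set H : Subgroup (UenoField k ≃ₐ[↥F] UenoField k) := Subgroup.zpowers g' with hHdef
  have hcard : Fintype.card H = 4 := by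
    rw [← Nat.card_eq_fintype_card, hHdef, Nat.card_zpowers, horder]
  have hArtin : Module.finrank ↥(IntermediateField.fixedField H) (UenoField k) = 4 := by
    rw [IntermediateField.finrank_fixedField_eq_card, Nat.card_eq_fintype_card, hcard]
  have htower := Module.finrank_mul_finrank ↥F ↥(IntermediateField.fixedField H) (UenoField k)
  have hd1 : Module.finrank ↥F ↥(IntermediateField.fixedField H) = 1 := by
    have hge : 0 < Module.finrank ↥F ↥(IntermediateField.fixedField H) :=
      Module.finrank_pos
    rw [hArtin] at htower
    omega
  have hbot : IntermediateField.fixedField H = ⊥ :=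
    IntermediateField.finrank_eq_one_iff.mp hd1
  have hfH : f ∈ IntermediateField.fixedField H := by
    intro m
    obtain ⟨n, hn⟩ := Subgroup.mem_zpowers_iff.mp m.2
    show (m : UenoField k ≃ₐ[↥F] UenoField k) • f = f
    rw [AlgEquiv.smul_def, ← hn]
    exact fix_zpow g' hf n
  rw [hbot] at hfH
  obtain ⟨c, hc⟩ := IntermediateField.mem_bot.mp hfH
  rw [← hc]
  exact c.2

set_option synthInstance.maxHeartbeats 1000000 in
/-- **Proposition 2.4**: let `g` be the `k`-automorphism of `K = k(Z)` with `g(xᵢ) = -xᵢ`,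
`g(yᵢ) = ζyᵢ` (`ζ² = -1`).  Then the fixed field `K^g` (the function field of the
Ueno-Campana threefold) equals the subfield `k(b₂, b₃, a₂, a₃)` generated over `k` by
`b₂ = x₂/x₁`, `b₃ = x₃/x₁`, `a₂ = y₂/y₁`, `a₃ = y₃/y₁`. -/
theorem fixed_field_eq_k_b2_b3_a2_a3 (h2 : (2 : k) ≠ 0) (ζ : k) (hζ : ζ ^ 2 = -1)
    (hne : ∀ i : Fin 6, xv k i ≠ 0)
    (g : UenoField k ≃ₐ[k] UenoField k)
    (hgx1 : g (x1 k) = -x1 k) (hgx2 : g (x2 k) = -x2 k) (hgx3 : g (x3 k) = -x3 k)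
    (hgy1 : g (y1 k) = algebraMap k (UenoField k) ζ * y1 k)
    (hgy2 : g (y2 k) = algebraMap k (UenoField k) ζ * y2 k)
    (hgy3 : g (y3 k) = algebraMap k (UenoField k) ζ * y3 k) :
    ∀ f : UenoField k,
      g f = f ↔
        f ∈ IntermediateField.adjoin k
          ({b2 k, b3 k, a2 k, a3 k} : Set (UenoField k)) := by
  classical
  intro f
  set F : IntermediateField k (UenoField k) :=
    IntermediateField.adjoin k ({b2 k, b3 k, a2 k, a3 k} : Set (UenoField k)) with hFdef
  -- membership of the generators
  have hb2F : b2 k ∈ F := IntermediateField.subset_adjoin _ _ (by simp)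
  have hb3F : b3 k ∈ F := IntermediateField.subset_adjoin _ _ (by simp)
  have ha2F : a2 k ∈ F := IntermediateField.subset_adjoin _ _ (by simp)
  have ha3F : a3 k ∈ F := IntermediateField.subset_adjoin _ _ (by simp)
  -- nonvanishing
  have hx1 : x1 k ≠ 0 := hne 0
  have hy1 : y1 k ≠ 0 := hne 1
  have hx2 : x2 k ≠ 0 := hne 2
  have hx3 : x3 k ≠ 0 := hne 4
  have h2K : (2 : UenoField k) ≠ 0 := by
    intro h
    apply h2
    apply (algebraMap k (UenoField k)).injective
    rw [map_ofNat, map_zero]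
    exact h
  have hζ0 : ζ ≠ 0 := by
    intro h; rw [h] at hζ; norm_num at hζ
  have hζK : algebraMap k (UenoField k) ζ ≠ 0 :=
    fun h => hζ0 ((algebraMap k (UenoField k)).injective (by rw [map_zero]; exact h))
  have hkey := ueno_key k hx1 hy1
  -- a₂² - b₂³ ≠ 0
  have hden : a2 k ^ 2 - b2 k ^ 3 ≠ 0 := by
    intro h0
    have h1 : a2 k ^ 2 = b2 k := by linear_combination x1 k ^ 2 * h0 - hkey
    have hb2c : b2 k ^ 3 = b2 k := by linear_combination h1 - h0
    have hcross : x2 k ^ 3 * x1 k = x2 k * x1 k ^ 3 := by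
      rw [b2, div_pow, div_eq_div_iff (pow_ne_zero _ hx1) hx1] at hb2c
      linear_combination hb2c
    have hz : (x2 k - x1 k) * ((x2 k + x1 k) * (x2 k * x1 k)) = 0 := by
      linear_combination hcross
    rcases mul_eq_zero.mp hz with h | h
    · exact (ueno_sub_ne_s7 k).1 h
    rcases mul_eq_zero.mp h with h | h
    · exact (ueno_sub_ne_s7 k).2 h
    · exact mul_ne_zero hx2 hx1 h
  -- x₁² ∈ F
  have hx1sqF : x1 k ^ 2 ∈ F := by
    have : x1 k ^ 2 = (a2 k ^ 2 - b2 k) / (a2 k ^ 2 - b2 k ^ 3) := by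
      rw [eq_div_iff hden]; linear_combination hkey
    rw [this]
    exact div_mem (sub_mem (pow_mem ha2F 2) hb2F)
      (sub_mem (pow_mem ha2F 2) (pow_mem hb2F 3))
  have hx1sub : x1 k ^ 2 - 1 ≠ 0 := by
    intro h
    apply hy1
    have := ueno_rel1 k
    rw [h, mul_zero] at this
    exact pow_eq_zero_iff two_ne_zero |>.mp this
  have hy14F : y1 k ^ 4 ∈ F := by
    have : y1 k ^ 4 = x1 k ^ 2 * (x1 k ^ 2 - 1) ^ 2 := by
      linear_combination (y1 k ^ 2 + x1 k * (x1 k ^ 2 - 1)) * ueno_rel1 k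
    rw [this]
    exact mul_mem hx1sqF (pow_mem (sub_mem hx1sqF (one_mem F)) 2)
  -- g fixes F pointwise
  have hgb2 : g (b2 k) = b2 k := by rw [b2, map_div₀, hgx2, hgx1]; ring
  have hgb3 : g (b3 k) = b3 k := by rw [b3, map_div₀, hgx3, hgx1]; ring
  have hga2 : g (a2 k) = a2 k := by
    rw [a2, map_div₀, hgy2, hgy1, mul_div_mul_left _ _ hζK]
  have hga3 : g (a3 k) = a3 k := by
    rw [a3, map_div₀, hgy3, hgy1, mul_div_mul_left _ _ hζK]
  have hgfix : ∀ z ∈ F, g z = z := by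
    have hle : F ≤ IntermediateField.fixedField (Subgroup.zpowers g) := by
      rw [hFdef, IntermediateField.adjoin_le_iff]
      intro t ht
      simp only [Set.mem_insert_iff, Set.mem_singleton_iff] at ht
      have hgt : g t = t := by rcases ht with rfl | rfl | rfl | rfl <;> assumption
      intro m
      obtain ⟨n, hn⟩ := Subgroup.mem_zpowers_iff.mp m.2
      have hm : (m : UenoField k ≃ₐ[k] UenoField k) t = t := by rw [← hn]; exact fix_zpow g hgt n
      exact hm
    intro z hz
    exact hle hz ⟨g, Subgroup.mem_zpowers g⟩
  -- upgrade g to an F-algebra automorphism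
  let g' : UenoField k ≃ₐ[↥F] UenoField k :=
    { g.toRingEquiv with commutes' := fun c => hgfix c c.2 }
  have hg'app : ∀ z : UenoField k, g' z = g z := fun _ => rfl
  -- g'^4 = 1
  have hg4 : ∀ x : UenoField k, g (g (g (g x))) = x := by
    have hgen : ∀ i, (g.trans (g.trans (g.trans g))) (xv k i) = xv k i := by
      intro i
      have hx : ∀ t : UenoField k, g t = -t → g (g (g (g t))) = t := by
        intro t ht; rw [ht, map_neg, ht, neg_neg, ht, map_neg, ht, neg_neg]
      have hy : ∀ t : UenoField k, g t = algebraMap k (UenoField k) ζ * t → g (g (g (g t))) = t := by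
        intro t ht
        have h1 : g (g t) = -t := by
          rw [ht, map_mul, AlgEquiv.commutes, ht, ← mul_assoc, ← map_mul,
            (show ζ * ζ = -1 by linear_combination hζ), map_neg, map_one]
          ring
        rw [h1, map_neg, map_neg, h1, neg_neg]
      fin_cases i
      · exact hx (x1 k) hgx1
      · exact hy (y1 k) hgy1
      · exact hx (x2 k) hgx2
      · exact hy (y2 k) hgy2
      · exact hx (x3 k) hgx3
      · exact hy (y3 k) hgy3
    intro x
    exact ueno_fix_of_fix_gens k _ hgen x
  have hpow4 : g' ^ 4 = 1 := by
    ext z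
    show (g' ^ 4) z = z
    have h4 : (g' ^ 4) z = g' (g' (g' (g' z))) := by
      rw [pow_succ, pow_succ, pow_succ, pow_one]
      rfl
    rw [h4, hg'app, hg'app, hg'app, hg'app]
    exact hg4 z
  -- order of g' is 4
  have hne1 : g' ≠ 1 := by
    intro h
    have h1 : algebraMap k (UenoField k) ζ * y1 k = y1 k := by
      rw [← hgy1, ← hg'app, h]; rfl
    have h2' : (algebraMap k (UenoField k) ζ - 1) * y1 k = 0 := by linear_combination h1
    rcases mul_eq_zero.mp h2' with h' | h'
    · have h3 : ζ = 1 := by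
        apply (algebraMap k (UenoField k)).injective
        rw [map_one]
        linear_combination h'
      rw [h3] at hζ
      exact h2 (by linear_combination hζ)
    · exact hy1 h'
  have hne2 : g' ^ 2 ≠ 1 := by
    intro h
    have h1 : (g' ^ 2) (y1 k) = y1 k := by rw [h]; rfl
    have hgg : (g' ^ 2) (y1 k) = -y1 k := by
      have e1 : (g' ^ 2) (y1 k) = g' (g' (y1 k)) := by
        rw [pow_succ, pow_one]; rfl
      rw [e1, hg'app, hg'app, hgy1, map_mul, AlgEquiv.commutes, hgy1, ← mul_assoc,
        ← map_mul, (show ζ * ζ = -1 by linear_combination hζ), map_neg, map_one]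
      ring
    rw [hgg] at h1
    have hh : (2 : UenoField k) * y1 k = 0 := by linear_combination -h1
    rcases mul_eq_zero.mp hh with h' | h'
    · exact h2K h'
    · exact hy1 h'
  have horder : orderOf g' = 4 := by
    have hdvd : orderOf g' ∣ 4 := orderOf_dvd_of_pow_eq_one hpow4
    have h4le : orderOf g' ≤ 4 := Nat.le_of_dvd (by norm_num) hdvd
    obtain ⟨c, hc⟩ := hdvd
    interval_cases h : orderOf g'
    · omega
    · exact absurd (orderOf_eq_one_iff.mp h) hne1
    · exact absurd (h ▸ pow_orderOf_eq_one g') hne2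
    · omega
    · rfl
  constructor
  · intro hf
    exact ueno_final k F hb2F hb3F ha2F ha3F hx1 hy1 hx1sqF hy14F hx1sub g' horder f
      (by rw [hg'app]; exact hf)
  · intro hf
    exact hgfix f hf
end
end
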